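/- Let φ be a 3-SAT formula with clauses C_1,…,C_m over variables x_1,…,x_n, and consider the cake-cutting instance constructed from φ as described. Let 0 ≤ ε ≤ 0.01. If this instance admits a contiguous ε-envy-free allocation in which at most 2m+n of the cuts lie strictly inside the union of the Clause-Gadgets and the Variable-Gadgets, then φ is satisfiable. -/

import Mathlib

/-- The agents of the cake-cutting instance built from a 3-SAT formula with `m` clauses
and `n` variables: clause agents `C i k`, variable agents `L j`, `R j`, the agents
`S 0, …, S (m+n-1)` and the agent `S₀'`. -/
inductive CakeAgent (m n : ℕ) : Type where
  | cl : Fin m → Fin 3 → CakeAgent m n      -- clause agent C_i^k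
  | lt : Fin n → CakeAgent m n              -- variable agent L_j
  | rt : Fin n → CakeAgent m n              -- variable agent R_j
  | sep : Fin (m + n) → CakeAgent m n       -- agents S_0, S_1, …, S_{m+n-1}
  | sep' : CakeAgent m n                    -- agent S_0'

/-- Indicator density of the interval `[s, t]` (a block of height 1). -/
noncomputable def blockInd (s t x : ℝ) : ℝ := if s ≤ x ∧ x ≤ t then 1 else 0

/-- Left endpoint of the Clause-Gadget of clause `i` (`0`-indexed). -/
def clauseStart {m : ℕ} (i : Fin m) : ℝ := 3 + 12 * (i : ℕ)

/-- Left endpoint of the Variable-Gadget of variable `j` (`0`-indexed). -/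
def varStart (m : ℕ) {n : ℕ} (j : Fin n) : ℝ := 3 + 12 * m + 7 * (j : ℕ)

/-- Left endpoint of the Isolating Interval `I_k` (with `I_0` the Initiation Interval). -/
def isoStart (m : ℕ) (k : ℕ) : ℝ :=
  if k = 0 then 0 else if k ≤ m then 12 * k else 12 * m + 7 * (k - m)

/-- The density of each agent of the instance built from the 3-SAT formula `φ`
(`φ i k = (j, pol)` means the `k`-th literal of clause `i` is `x_j` if `pol = true`
and `¬ x_j` if `pol = false`). All blocks have height 1. -/
noncomputable def cakeDensity (m n : ℕ) (φ : Fin m → Fin 3 → Fin n × Bool) :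
    CakeAgent m n → ℝ → ℝ
  | .cl i k => fun x =>
      blockInd (clauseStart i + (k : ℕ)) (clauseStart i + (k : ℕ) + 0.24) x +
      blockInd (clauseStart i + (k : ℕ) + 3) (clauseStart i + (k : ℕ) + 3.24) x +
      blockInd (clauseStart i + (k : ℕ) + 6) (clauseStart i + (k : ℕ) + 6.24) x +
      blockInd (varStart m (φ i k).1 + (if (φ i k).2 then 1.5 else 2.5) - 0.14)
               (varStart m (φ i k).1 + (if (φ i k).2 then 1.5 else 2.5) + 0.14) x
  | .lt j => fun x => blockInd (varStart m j) (varStart m j + 1) x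
  | .rt j => fun x => blockInd (varStart m j + 3) (varStart m j + 4) x
  | .sep k => fun x =>
      if k.val = 0 then
        blockInd (0.5 - 1/14) (0.5 + 1/14) x +
        blockInd (2.5 - 1/7) (2.5 + 1/7) x +
        blockInd (isoStart m 1 + 0.5 - 1/7) (isoStart m 1 + 0.5 + 1/7) x +
        blockInd (isoStart m 1 + 2.5 - 1/7) (isoStart m 1 + 2.5 + 1/7) x
      else if k.val = m + n - 1 then
        blockInd (isoStart m k.val + 1) (isoStart m k.val + 2) x
      else
        blockInd (isoStart m k.val + 1.5 - 0.1) (isoStart m k.val + 1.5 + 0.1) x +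
        blockInd (isoStart m (k.val + 1) + 0.5 - 0.2) (isoStart m (k.val + 1) + 0.5 + 0.2) x +
        blockInd (isoStart m (k.val + 1) + 2.5 - 0.2) (isoStart m (k.val + 1) + 2.5 + 0.2) x
  | .sep' => fun x => blockInd 1 2 x

/-- Satisfiability of the 3-SAT formula `φ`. -/
def SatFormula (m n : ℕ) (φ : Fin m → Fin 3 → Fin n × Bool) : Prop :=
  ∃ a : Fin n → Bool, ∀ i : Fin m, ∃ k : Fin 3, a (φ i k).1 = (φ i k).2

/-- Value of agent `A` for the piece `[s, t]`. -/
noncomputable def cakeVal (m n : ℕ) (φ : Fin m → Fin 3 → Fin n × Bool)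
    (A : CakeAgent m n) (s t : ℝ) : ℝ :=
  ∫ x in s..t, cakeDensity m n φ A x

/-- A point lies strictly inside a Clause-Gadget or a Variable-Gadget. -/
def InGadgetInterior (m n : ℕ) (x : ℝ) : Prop :=
  (∃ i : Fin m, clauseStart i < x ∧ x < clauseStart i + 9) ∨
  (∃ j : Fin n, varStart m j < x ∧ x < varStart m j + 4)


open MeasureTheory Set

/-- overlap length of `[s,t]` and `[u,v]`. -/
noncomputable def olap (s t u v : ℝ) : ℝ := max 0 (min t v - max s u)

lemma olap_nonneg (s t u v : ℝ) : 0 ≤ olap s t u v := le_max_left _ _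

lemma olap_le (s t u v : ℝ) : olap s t u v ≤ max 0 (t - u) :=
  max_le_max le_rfl (by have := min_le_left t v; have := le_max_right s u; linarith)

lemma olap_le' (s t u v : ℝ) : olap s t u v ≤ max 0 (v - s) :=
  max_le_max le_rfl (by have := min_le_right t v; have := le_max_left s u; linarith)

lemma olap_le_width (s t u v : ℝ) (huv : u ≤ v) : olap s t u v ≤ v - u := by
  apply max_le (by linarith)
  have := min_le_right t v; have := le_max_right s u; linarith

lemma olap_eq_width (s t u v : ℝ) (hsu : s ≤ u) (hvt : v ≤ t) (huv : u ≤ v) :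
    olap s t u v = v - u := by
  unfold olap
  rw [min_eq_right hvt, max_eq_right hsu, max_eq_right (by linarith)]

lemma olap_eq_zero_left (s t u v : ℝ) (h : t ≤ u) : olap s t u v = 0 := by
  unfold olap
  rw [max_eq_left]
  have := min_le_left t v; have := le_max_right s u; linarith

lemma olap_eq_zero_right (s t u v : ℝ) (h : v ≤ s) : olap s t u v = 0 := by
  unfold olap
  rw [max_eq_left]
  have := min_le_right t v; have := le_max_left s u; linarith

lemma olap_pair (s c t u v : ℝ) (hs : s ≤ u) (ht : v ≤ t) (huv : u ≤ v) :
    v - u ≤ olap s c u v + olap c t u v := by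
  rcases le_total c u with h | h
  · have h2 : olap c t u v = v - u := by
      unfold olap
      rw [min_eq_right ht, max_eq_right h, max_eq_right (by linarith)]
    have := olap_nonneg s c u v; linarith
  · rcases le_total v c with h' | h'
    · have h2 : olap s c u v = v - u := olap_eq_width s c u v hs h' huv
      have := olap_nonneg c t u v; linarith
    · have h2 : olap s c u v = c - u := by
        unfold olap
        rw [min_eq_left h', max_eq_right hs, max_eq_right (by linarith)]
      have h3 : olap c t u v = v - c := by
        unfold olap
        rw [min_eq_right ht, max_eq_left h, max_eq_right (by linarith)]
      linarith

lemma blockInd_eq (u v : ℝ) : blockInd u v = Set.indicator (Icc u v) (fun _ => (1:ℝ)) := by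
  funext x; simp [blockInd, Set.indicator_apply, Set.mem_Icc]

lemma blockInd_nonneg (u v x : ℝ) : 0 ≤ blockInd u v x := by
  unfold blockInd; positivity

lemma blockInd_integrable (u v : ℝ) : Integrable (blockInd u v) := by
  rw [blockInd_eq, MeasureTheory.integrable_indicator_iff measurableSet_Icc]
  exact integrableOn_const measure_Icc_lt_top.ne (by simp)

lemma blockInd_intervalIntegrable (u v s t : ℝ) :
    IntervalIntegrable (blockInd u v) volume s t :=
  (blockInd_integrable u v).intervalIntegrable

lemma integral_blockInd (u v s t : ℝ) (hst : s ≤ t) :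
    ∫ x in s..t, blockInd u v x = olap s t u v := by
  rw [blockInd_eq, intervalIntegral.integral_of_le hst,
      MeasureTheory.setIntegral_indicator measurableSet_Icc,
      MeasureTheory.setIntegral_const]
  have h1 : Ioc (max s u) (min t v) ⊆ Ioc s t ∩ Icc u v := by
    intro x hx
    rcases hx with ⟨h1, h2⟩
    exact ⟨⟨lt_of_le_of_lt (le_max_left s u) h1, h2.trans (min_le_left t v)⟩,
      ⟨le_of_lt (lt_of_le_of_lt (le_max_right s u) h1), h2.trans (min_le_right t v)⟩⟩
  have h2 : Ioc s t ∩ Icc u v ⊆ Icc (max s u) (min t v) := by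
    intro x hx
    rcases hx with ⟨⟨ha, hb⟩, ⟨hc, hd⟩⟩
    exact ⟨max_le ha.le hc, le_min hb hd⟩
  have hv1 := measure_mono (μ := volume) h1
  have hv2 := measure_mono (μ := volume) h2
  rw [Real.volume_Ioc] at hv1
  rw [Real.volume_Icc] at hv2
  have hE : volume (Ioc s t ∩ Icc u v) = ENNReal.ofReal (min t v - max s u) :=
    le_antisymm hv2 hv1
  rw [measureReal_def, hE]
  unfold olap
  rcases le_total (min t v - max s u) 0 with h | h
  · rw [ENNReal.ofReal_eq_zero.2 h]
    simp [max_eq_left h]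
  · rw [ENNReal.toReal_ofReal h]
    simp [max_eq_right h]

section Layer2
variable (m n : ℕ) (φ : Fin m → Fin 3 → Fin n × Bool)

lemma cakeDensity_nonneg (A : CakeAgent m n) (x : ℝ) : 0 ≤ cakeDensity m n φ A x := by
  cases A <;> simp only [cakeDensity] <;> try split_ifs
  all_goals
    first
      | exact blockInd_nonneg _ _ _
      | exact add_nonneg (add_nonneg (add_nonneg (blockInd_nonneg _ _ _)
          (blockInd_nonneg _ _ _)) (blockInd_nonneg _ _ _)) (blockInd_nonneg _ _ _)
      | exact add_nonneg (add_nonneg (blockInd_nonneg _ _ _)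
          (blockInd_nonneg _ _ _)) (blockInd_nonneg _ _ _)

lemma cakeDensity_integrable (A : CakeAgent m n) : Integrable (cakeDensity m n φ A) := by
  cases A <;> simp only [cakeDensity] <;> try split_ifs
  all_goals
    first
      | exact blockInd_integrable _ _
      | exact ((((blockInd_integrable _ _).add (blockInd_integrable _ _)).add
          (blockInd_integrable _ _)).add (blockInd_integrable _ _))
      | exact (((blockInd_integrable _ _).add (blockInd_integrable _ _)).add
          (blockInd_integrable _ _))

lemma cakeVal_nonneg {s t : ℝ} (hst : s ≤ t) (A : CakeAgent m n) :
    0 ≤ cakeVal m n φ A s t :=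
  intervalIntegral.integral_nonneg hst (fun x _ => cakeDensity_nonneg m n φ A x)

lemma cakeVal_add (s t u : ℝ) (A : CakeAgent m n) :
    cakeVal m n φ A s t + cakeVal m n φ A t u = cakeVal m n φ A s u :=
  intervalIntegral.integral_add_adjacent_intervals
    ((cakeDensity_integrable m n φ A).intervalIntegrable)
    ((cakeDensity_integrable m n φ A).intervalIntegrable)

lemma cakeVal_cl (i : Fin m) (k : Fin 3) {s t : ℝ} (hst : s ≤ t) :
    cakeVal m n φ (.cl i k) s t =
      olap s t (clauseStart i + (k : ℕ)) (clauseStart i + (k : ℕ) + 0.24) +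
      olap s t (clauseStart i + (k : ℕ) + 3) (clauseStart i + (k : ℕ) + 3.24) +
      olap s t (clauseStart i + (k : ℕ) + 6) (clauseStart i + (k : ℕ) + 6.24) +
      olap s t (varStart m (φ i k).1 + (if (φ i k).2 then 1.5 else 2.5) - 0.14)
               (varStart m (φ i k).1 + (if (φ i k).2 then 1.5 else 2.5) + 0.14) := by
  unfold cakeVal
  simp only [cakeDensity]
  rw [intervalIntegral.integral_add
        (((blockInd_intervalIntegrable _ _ _ _).add (blockInd_intervalIntegrable _ _ _ _)).add
          (blockInd_intervalIntegrable _ _ _ _)) (blockInd_intervalIntegrable _ _ _ _),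
      intervalIntegral.integral_add
        ((blockInd_intervalIntegrable _ _ _ _).add (blockInd_intervalIntegrable _ _ _ _))
        (blockInd_intervalIntegrable _ _ _ _),
      intervalIntegral.integral_add
        (blockInd_intervalIntegrable _ _ _ _) (blockInd_intervalIntegrable _ _ _ _),
      integral_blockInd _ _ _ _ hst, integral_blockInd _ _ _ _ hst,
      integral_blockInd _ _ _ _ hst, integral_blockInd _ _ _ _ hst]

lemma cakeVal_lt (j : Fin n) {s t : ℝ} (hst : s ≤ t) :
    cakeVal m n φ (.lt j) s t = olap s t (varStart m j) (varStart m j + 1) := by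
  unfold cakeVal
  simp only [cakeDensity]
  rw [integral_blockInd _ _ _ _ hst]

lemma cakeVal_rt (j : Fin n) {s t : ℝ} (hst : s ≤ t) :
    cakeVal m n φ (.rt j) s t = olap s t (varStart m j + 3) (varStart m j + 4) := by
  unfold cakeVal
  simp only [cakeDensity]
  rw [integral_blockInd _ _ _ _ hst]

lemma cakeVal_cl_le_one (i : Fin m) (k : Fin 3) {s t : ℝ} (hst : s ≤ t) :
    cakeVal m n φ (.cl i k) s t ≤ 1 := by
  rw [cakeVal_cl m n φ i k hst]
  have h1 := olap_le_width s t (clauseStart i + (k : ℕ)) (clauseStart i + (k : ℕ) + 0.24)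
    (by linarith)
  have h2 := olap_le_width s t (clauseStart i + (k : ℕ) + 3) (clauseStart i + (k : ℕ) + 3.24)
    (by linarith)
  have h3 := olap_le_width s t (clauseStart i + (k : ℕ) + 6) (clauseStart i + (k : ℕ) + 6.24)
    (by linarith)
  have h4 := olap_le_width s t
    (varStart m (φ i k).1 + (if (φ i k).2 then 1.5 else 2.5) - 0.14)
    (varStart m (φ i k).1 + (if (φ i k).2 then 1.5 else 2.5) + 0.14) (by linarith)
  linarith

lemma cakeVal_lt_le_one (j : Fin n) {s t : ℝ} (hst : s ≤ t) :
    cakeVal m n φ (.lt j) s t ≤ 1 := by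
  rw [cakeVal_lt m n φ j hst]
  have := olap_le_width s t (varStart m j) (varStart m j + 1) (by linarith)
  linarith

lemma cakeVal_rt_le_one (j : Fin n) {s t : ℝ} (hst : s ≤ t) :
    cakeVal m n φ (.rt j) s t ≤ 1 := by
  rw [cakeVal_rt m n φ j hst]
  have := olap_le_width s t (varStart m j + 3) (varStart m j + 4) (by linarith)
  linarith

/-- two distinct pieces: sum of values at most the whole-cake value. -/
lemma pieces_sum2 {N : ℕ} (y : Fin (N + 1) → ℝ) (hmono : Monotone y)
    (A : CakeAgent m n) {t1 t2 : Fin N} (h : t1 ≠ t2) :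
    cakeVal m n φ A (y t1.castSucc) (y t1.succ) + cakeVal m n φ A (y t2.castSucc) (y t2.succ)
      ≤ cakeVal m n φ A (y 0) (y (Fin.last N)) := by
  have core : ∀ s1 s2 : Fin N, s1 < s2 →
      cakeVal m n φ A (y s1.castSucc) (y s1.succ) + cakeVal m n φ A (y s2.castSucc) (y s2.succ)
        ≤ cakeVal m n φ A (y 0) (y (Fin.last N)) := by
    intro s1 s2 hlt
    have e : cakeVal m n φ A (y 0) (y (Fin.last N)) =
        cakeVal m n φ A (y 0) (y s1.castSucc) +
        cakeVal m n φ A (y s1.castSucc) (y s1.succ) +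
        cakeVal m n φ A (y s1.succ) (y s2.castSucc) +
        cakeVal m n φ A (y s2.castSucc) (y s2.succ) +
        cakeVal m n φ A (y s2.succ) (y (Fin.last N)) := by
      rw [cakeVal_add, cakeVal_add, cakeVal_add, cakeVal_add]
    have n1 : 0 ≤ cakeVal m n φ A (y 0) (y s1.castSucc) :=
      cakeVal_nonneg m n φ (hmono (Fin.zero_le _)) A
    have n2 : 0 ≤ cakeVal m n φ A (y s1.succ) (y s2.castSucc) :=
      cakeVal_nonneg m n φ (hmono (by rwa [Fin.succ_le_castSucc_iff])) A
    have n3 : 0 ≤ cakeVal m n φ A (y s2.succ) (y (Fin.last N)) :=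
      cakeVal_nonneg m n φ (hmono (Fin.le_last _)) A
    linarith
  rcases h.lt_or_gt with hlt | hlt
  · exact core _ _ hlt
  · have := core _ _ hlt; linarith

/-- three pairwise distinct pieces. -/
lemma pieces_sum3 {N : ℕ} (y : Fin (N + 1) → ℝ) (hmono : Monotone y)
    (A : CakeAgent m n) {t1 t2 t3 : Fin N} (h12 : t1 ≠ t2) (h13 : t1 ≠ t3) (h23 : t2 ≠ t3) :
    cakeVal m n φ A (y t1.castSucc) (y t1.succ) + cakeVal m n φ A (y t2.castSucc) (y t2.succ)
      + cakeVal m n φ A (y t3.castSucc) (y t3.succ)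
      ≤ cakeVal m n φ A (y 0) (y (Fin.last N)) := by
  have core : ∀ s1 s2 s3 : Fin N, s1 < s2 → s2 < s3 →
      cakeVal m n φ A (y s1.castSucc) (y s1.succ) + cakeVal m n φ A (y s2.castSucc) (y s2.succ)
        + cakeVal m n φ A (y s3.castSucc) (y s3.succ)
        ≤ cakeVal m n φ A (y 0) (y (Fin.last N)) := by
    intro s1 s2 s3 h1 h2
    have e : cakeVal m n φ A (y 0) (y (Fin.last N)) =
        cakeVal m n φ A (y 0) (y s1.castSucc) +
        cakeVal m n φ A (y s1.castSucc) (y s1.succ) +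
        cakeVal m n φ A (y s1.succ) (y s2.castSucc) +
        cakeVal m n φ A (y s2.castSucc) (y s2.succ) +
        cakeVal m n φ A (y s2.succ) (y s3.castSucc) +
        cakeVal m n φ A (y s3.castSucc) (y s3.succ) +
        cakeVal m n φ A (y s3.succ) (y (Fin.last N)) := by
      rw [cakeVal_add, cakeVal_add, cakeVal_add, cakeVal_add, cakeVal_add, cakeVal_add]
    have n1 : 0 ≤ cakeVal m n φ A (y 0) (y s1.castSucc) :=
      cakeVal_nonneg m n φ (hmono (Fin.zero_le _)) A
    have n2 : 0 ≤ cakeVal m n φ A (y s1.succ) (y s2.castSucc) :=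
      cakeVal_nonneg m n φ (hmono (by rwa [Fin.succ_le_castSucc_iff])) A
    have n3 : 0 ≤ cakeVal m n φ A (y s2.succ) (y s3.castSucc) :=
      cakeVal_nonneg m n φ (hmono (by rwa [Fin.succ_le_castSucc_iff])) A
    have n4 : 0 ≤ cakeVal m n φ A (y s3.succ) (y (Fin.last N)) :=
      cakeVal_nonneg m n φ (hmono (Fin.le_last _)) A
    linarith
  rcases h12.lt_or_gt with h | h <;> rcases h13.lt_or_gt with h' | h' <;>
    rcases h23.lt_or_gt with h'' | h''
  all_goals first
    | (have := core _ _ _ h h''; linarith)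
    | (have := core _ _ _ h' h''.symm.lt_of_le (le_of_lt h'') ; linarith)
    | (have := core t1 t3 t2 h' h''; linarith)
    | (have := core t2 t1 t3 h h'; linarith)
    | (have := core t2 t3 t1 h'' h'; linarith)
    | (have := core t3 t1 t2 h' h; linarith)
    | (have := core t3 t2 t1 h'' h; linarith)
    | (exfalso; exact absurd (h.trans h'') (by exact fun hh => (lt_asymm hh) h'))
    | linarith [core t1 t2 t3 h h'', core t1 t3 t2 h' h'', core t2 t1 t3 h h',
        core t2 t3 t1 h'' h', core t3 t1 t2 h' h, core t3 t2 t1 h'' h]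

/-- a piece of Fin N covering an interval with no cut strictly inside. -/
lemma cover_piece {N : ℕ} (y : Fin (N + 1) → ℝ) (hmono : Monotone y)
    (c d : ℝ) (hc : y 0 ≤ c) (hcd : c < d) (hd : d ≤ y (Fin.last N))
    (hno : ∀ k : Fin (N + 1), ¬(c < y k ∧ y k < d)) :
    ∃ t : Fin N, y t.castSucc ≤ c ∧ d ≤ y t.succ := by
  have hN : 0 < N := by
    by_contra h
    have h0 : N = 0 := by omega
    subst h0
    have : (0 : Fin 1) = Fin.last 0 := rfl
    rw [← this] at hd
    linarith
  classical
  set F : Finset (Fin N) := Finset.univ.filter (fun t => y t.castSucc ≤ c) with hF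
  have hne : F.Nonempty := by
    refine ⟨⟨0, hN⟩, ?_⟩
    simp only [hF, Finset.mem_filter, Finset.mem_univ, true_and]
    have : (⟨0, hN⟩ : Fin N).castSucc = (0 : Fin (N+1)) := rfl
    rw [this]; exact hc
  set t := F.max' hne with ht
  have htF : t ∈ F := F.max'_mem hne
  have hct : y t.castSucc ≤ c := by
    simp only [hF, Finset.mem_filter] at htF; exact htF.2
  refine ⟨t, hct, ?_⟩
  by_contra hlt
  push_neg at hlt
  have hsucc_le : y t.succ ≤ c := by
    rcases le_or_gt (y t.succ) c with h | h
    · exact h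
    · exact absurd ⟨h, hlt⟩ (hno t.succ)
  have htne : t.succ ≠ Fin.last N := by
    intro he
    rw [he] at hsucc_le
    linarith
  have hlt2 : t.val + 1 < N := by
    have := t.succ.isLt
    have hv : t.succ.val = t.val + 1 := rfl
    have hne2 : t.succ.val ≠ N := fun hh => htne (Fin.ext (by rw [hh, Fin.val_last]))
    omega
  set t' : Fin N := ⟨t.val + 1, hlt2⟩ with ht'
  have ht'F : t' ∈ F := by
    simp only [hF, Finset.mem_filter, Finset.mem_univ, true_and]
    have : t'.castSucc = t.succ := by
      apply Fin.ext; simp [Fin.val_succ, ht']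
    rw [this]; exact hsucc_le
  have := F.le_max' t' ht'F
  rw [← ht] at this
  have : t'.val ≤ t.val := this
  simp [ht'] at this
end Layer2
section Main
variable {m n : ℕ} {φ : Fin m → Fin 3 → Fin n × Bool} {ε : ℝ}
  {y : Fin (4 * m + 3 * n + 1 + 1) → ℝ} {π : CakeAgent m n ≃ Fin (4 * m + 3 * n + 1)}

lemma fin3_cases (f : Fin 3 → Fin (4 * m + 3 * n + 1)) (hf : Function.Injective f)
    (A B : Fin (4 * m + 3 * n + 1)) : ∃ k, f k ≠ A ∧ f k ≠ B := by
  by_contra h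
  push_neg at h
  have h' : ∀ k, f k = A ∨ f k = B := by
    intro k
    by_cases hA : f k = A
    · exact Or.inl hA
    · exact Or.inr (h k hA)
  rcases h' 0 with h0 | h0 <;> rcases h' 1 with h1 | h1 <;> rcases h' 2 with h2 | h2 <;>
    first
      | exact absurd (hf (h0.trans h1.symm)) (by decide)
      | exact absurd (hf (h0.trans h2.symm)) (by decide)
      | exact absurd (hf (h1.trans h2.symm)) (by decide)

lemma fin3_hits (f : Fin 3 → Fin (4 * m + 3 * n + 1)) (hf : Function.Injective f)
    (A B C : Fin (4 * m + 3 * n + 1)) (h' : ∀ k, f k = A ∨ f k = B ∨ f k = C) :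
    (∃ k, f k = A) ∧ (∃ k, f k = B) ∧ (∃ k, f k = C) := by
  refine ⟨?_, ?_, ?_⟩ <;> by_contra h <;> push_neg at h
  · have h'' : ∀ k, f k = B ∨ f k = C := fun k => (h' k).resolve_left (h k)
    rcases h'' 0 with h0 | h0 <;> rcases h'' 1 with h1 | h1 <;> rcases h'' 2 with h2 | h2 <;>
      first
        | exact absurd (hf (h0.trans h1.symm)) (by decide)
        | exact absurd (hf (h0.trans h2.symm)) (by decide)
        | exact absurd (hf (h1.trans h2.symm)) (by decide)
  · have h'' : ∀ k, f k = A ∨ f k = C := by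
      intro k
      rcases h' k with hk | hk | hk
      · exact Or.inl hk
      · exact absurd hk (h k)
      · exact Or.inr hk
    rcases h'' 0 with h0 | h0 <;> rcases h'' 1 with h1 | h1 <;> rcases h'' 2 with h2 | h2 <;>
      first
        | exact absurd (hf (h0.trans h1.symm)) (by decide)
        | exact absurd (hf (h0.trans h2.symm)) (by decide)
        | exact absurd (hf (h1.trans h2.symm)) (by decide)
  · have h'' : ∀ k, f k = A ∨ f k = B := by
      intro k
      rcases h' k with hk | hk | hk
      · exact Or.inl hk
      · exact Or.inr hk
      · exact absurd hk (h k)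
    rcases h'' 0 with h0 | h0 <;> rcases h'' 1 with h1 | h1 <;> rcases h'' 2 with h2 | h2 <;>
      first
        | exact absurd (hf (h0.trans h1.symm)) (by decide)
        | exact absurd (hf (h0.trans h2.symm)) (by decide)
        | exact absurd (hf (h1.trans h2.symm)) (by decide)

lemma inj_cl (i : Fin m) : Function.Injective (fun k : Fin 3 => π (.cl i k)) := by
  intro k k' h
  have := π.injective h
  simpa using this

/-- envy towards an arbitrary piece. -/
lemma envy (hEF : ∀ A B : CakeAgent m n,
      cakeVal m n φ A (y (π A).castSucc) (y (π A).succ) ≥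
        cakeVal m n φ A (y (π B).castSucc) (y (π B).succ) - ε)
    (A : CakeAgent m n) (t : Fin (4 * m + 3 * n + 1)) :
    cakeVal m n φ A (y (π A).castSucc) (y (π A).succ) ≥
      cakeVal m n φ A (y t.castSucc) (y t.succ) - ε := by
  have := hEF A (π.symm t)
  rwa [Equiv.apply_symm_apply] at this

/-- if a piece fully contains `L j`'s block then `L j` owns it. -/
lemma owns_left (hε : ε ≤ 0.01) (hmono : Monotone y)
    (hEF : ∀ A B : CakeAgent m n,
      cakeVal m n φ A (y (π A).castSucc) (y (π A).succ) ≥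
        cakeVal m n φ A (y (π B).castSucc) (y (π B).succ) - ε)
    (j : Fin n) (s : Fin (4 * m + 3 * n + 1))
    (hs1 : y s.castSucc ≤ varStart m j) (hs2 : varStart m j + 1 ≤ y s.succ) :
    π (.lt j) = s := by
  by_contra hne
  have hle : y s.castSucc ≤ y s.succ := hmono (Fin.castSucc_le_succ s)
  have hv1 : cakeVal m n φ (.lt j) (y s.castSucc) (y s.succ) = 1 := by
    rw [cakeVal_lt m n φ j hle, olap_eq_width _ _ _ _ hs1 hs2 (by linarith)]
    ring
  have hsum := pieces_sum2 m n φ y hmono (.lt j) hne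
  have htot := cakeVal_lt_le_one m n φ j (hmono (Fin.zero_le (Fin.last _)))
  have henvy := envy hEF (.lt j) s
  rw [hv1] at hsum henvy
  linarith

/-- if a piece fully contains `R j`'s block then `R j` owns it. -/
lemma owns_right (hε : ε ≤ 0.01) (hmono : Monotone y)
    (hEF : ∀ A B : CakeAgent m n,
      cakeVal m n φ A (y (π A).castSucc) (y (π A).succ) ≥
        cakeVal m n φ A (y (π B).castSucc) (y (π B).succ) - ε)
    (j : Fin n) (s : Fin (4 * m + 3 * n + 1))
    (hs1 : y s.castSucc ≤ varStart m j + 3) (hs2 : varStart m j + 4 ≤ y s.succ) :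
    π (.rt j) = s := by
  by_contra hne
  have hle : y s.castSucc ≤ y s.succ := hmono (Fin.castSucc_le_succ s)
  have hv1 : cakeVal m n φ (.rt j) (y s.castSucc) (y s.succ) = 1 := by
    rw [cakeVal_rt m n φ j hle, olap_eq_width _ _ _ _ hs1 hs2 (by linarith)]
    ring
  have hsum := pieces_sum2 m n φ y hmono (.rt j) hne
  have htot := cakeVal_rt_le_one m n φ j (hmono (Fin.zero_le (Fin.last _)))
  have henvy := envy hEF (.rt j) s
  rw [hv1] at hsum henvy
  linarith

end Main
section Main2
variable {m n : ℕ} {φ : Fin m → Fin 3 → Fin n × Bool} {ε : ℝ}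
  {y : Fin (4 * m + 3 * n + 1 + 1) → ℝ} {π : CakeAgent m n ≃ Fin (4 * m + 3 * n + 1)}

lemma clauseStart_ge (i : Fin m) : (3:ℝ) ≤ clauseStart i := by
  unfold clauseStart
  have : (0:ℝ) ≤ ((i:ℕ):ℝ) := Nat.cast_nonneg _
  linarith

lemma clauseStart_le (i : Fin m) : clauseStart i + 9 ≤ 12 * (m:ℝ) := by
  unfold clauseStart
  have : ((i:ℕ):ℝ) + 1 ≤ (m:ℝ) := by exact_mod_cast i.isLt
  linarith

lemma varStart_ge (j : Fin n) : 3 + 12 * (m:ℝ) ≤ varStart m j := by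
  unfold varStart
  have : (0:ℝ) ≤ ((j:ℕ):ℝ) := Nat.cast_nonneg _
  linarith

lemma varStart_le (j : Fin n) : varStart m j + 4 ≤ 12 * (m:ℝ) + 7 * n := by
  unfold varStart
  have : ((j:ℕ):ℝ) + 1 ≤ (n:ℝ) := by exact_mod_cast j.isLt
  linarith

lemma kcast_le (k : Fin 3) : ((k:ℕ):ℝ) ≤ 2 := by
  have : (k:ℕ) ≤ 2 := by omega
  exact_mod_cast this

/-- no piece can cover a whole clause gadget. -/
lemma clause_cover_false (hε0 : 0 ≤ ε) (hε : ε ≤ 0.01) (hmono : Monotone y)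
    (hEF : ∀ A B : CakeAgent m n,
      cakeVal m n φ A (y (π A).castSucc) (y (π A).succ) ≥
        cakeVal m n φ A (y (π B).castSucc) (y (π B).succ) - ε)
    (i : Fin m) (t : Fin (4 * m + 3 * n + 1))
    (ht1 : y t.castSucc ≤ clauseStart i) (ht2 : clauseStart i + 9 ≤ y t.succ) : False := by
  obtain ⟨k, hk1, -⟩ := fin3_cases (fun k : Fin 3 => π (.cl i k)) (inj_cl i) t t
  have hle : y t.castSucc ≤ y t.succ := hmono (Fin.castSucc_le_succ t)
  have hkc := kcast_le k
  have hkc0 : (0:ℝ) ≤ ((k:ℕ):ℝ) := Nat.cast_nonneg _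
  have hv : 0.72 ≤ cakeVal m n φ (.cl i k) (y t.castSucc) (y t.succ) := by
    rw [cakeVal_cl m n φ i k hle]
    have h1 := olap_eq_width (y t.castSucc) (y t.succ)
      (clauseStart i + (k:ℕ)) (clauseStart i + (k:ℕ) + 0.24)
      (by linarith) (by linarith) (by linarith)
    have h2 := olap_eq_width (y t.castSucc) (y t.succ)
      (clauseStart i + (k:ℕ) + 3) (clauseStart i + (k:ℕ) + 3.24)
      (by linarith) (by linarith) (by linarith)
    have h3 := olap_eq_width (y t.castSucc) (y t.succ)
      (clauseStart i + (k:ℕ) + 6) (clauseStart i + (k:ℕ) + 6.24)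
      (by linarith) (by linarith) (by linarith)
    have h4 := olap_nonneg (y t.castSucc) (y t.succ)
      (varStart m (φ i k).1 + (if (φ i k).2 then 1.5 else 2.5) - 0.14)
      (varStart m (φ i k).1 + (if (φ i k).2 then 1.5 else 2.5) + 0.14)
    linarith
  have hsum := pieces_sum2 m n φ y hmono (.cl i k) hk1
  have htot := cakeVal_cl_le_one m n φ i k (hmono (Fin.zero_le (Fin.last _)))
  have henvy := envy hEF (.cl i k) t
  linarith

/-- no two adjacent pieces can cover a whole clause gadget. -/
lemma clause_cover2_false (hε0 : 0 ≤ ε) (hε : ε ≤ 0.01) (hmono : Monotone y)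
    (hEF : ∀ A B : CakeAgent m n,
      cakeVal m n φ A (y (π A).castSucc) (y (π A).succ) ≥
        cakeVal m n φ A (y (π B).castSucc) (y (π B).succ) - ε)
    (i : Fin m) (s t : Fin (4 * m + 3 * n + 1)) (hst : s ≠ t)
    (hmid : y s.succ = y t.castSucc)
    (hs1 : y s.castSucc ≤ clauseStart i) (ht2 : clauseStart i + 9 ≤ y t.succ) : False := by
  obtain ⟨k, hk1, hk2⟩ := fin3_cases (fun k : Fin 3 => π (.cl i k)) (inj_cl i) s t
  have hles : y s.castSucc ≤ y s.succ := hmono (Fin.castSucc_le_succ s)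
  have hlet : y t.castSucc ≤ y t.succ := hmono (Fin.castSucc_le_succ t)
  have hkc := kcast_le k
  have hkc0 : (0:ℝ) ≤ ((k:ℕ):ℝ) := Nat.cast_nonneg _
  have hv : 0.72 ≤ cakeVal m n φ (.cl i k) (y s.castSucc) (y s.succ) +
      cakeVal m n φ (.cl i k) (y t.castSucc) (y t.succ) := by
    rw [cakeVal_cl m n φ i k hles, cakeVal_cl m n φ i k hlet, ← hmid]
    have h1 := olap_pair (y s.castSucc) (y s.succ) (y t.succ)
      (clauseStart i + (k:ℕ)) (clauseStart i + (k:ℕ) + 0.24)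
      (by linarith) (by linarith) (by linarith)
    have h2 := olap_pair (y s.castSucc) (y s.succ) (y t.succ)
      (clauseStart i + (k:ℕ) + 3) (clauseStart i + (k:ℕ) + 3.24)
      (by linarith) (by linarith) (by linarith)
    have h3 := olap_pair (y s.castSucc) (y s.succ) (y t.succ)
      (clauseStart i + (k:ℕ) + 6) (clauseStart i + (k:ℕ) + 6.24)
      (by linarith) (by linarith) (by linarith)
    have h4 := olap_nonneg (y s.castSucc) (y s.succ)
      (varStart m (φ i k).1 + (if (φ i k).2 then 1.5 else 2.5) - 0.14)
      (varStart m (φ i k).1 + (if (φ i k).2 then 1.5 else 2.5) + 0.14)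
    have h5 := olap_nonneg (y s.succ) (y t.succ)
      (varStart m (φ i k).1 + (if (φ i k).2 then 1.5 else 2.5) - 0.14)
      (varStart m (φ i k).1 + (if (φ i k).2 then 1.5 else 2.5) + 0.14)
    linarith
  have hsum := pieces_sum3 m n φ y hmono (.cl i k) hk1 hk2 hst
  have htot := cakeVal_cl_le_one m n φ i k (hmono (Fin.zero_le (Fin.last _)))
  have henvy1 := envy hEF (.cl i k) s
  have henvy2 := envy hEF (.cl i k) t
  linarith

/-- no piece can cover a whole variable gadget. -/
lemma var_cover_false (hε : ε ≤ 0.01) (hmono : Monotone y)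
    (hEF : ∀ A B : CakeAgent m n,
      cakeVal m n φ A (y (π A).castSucc) (y (π A).succ) ≥
        cakeVal m n φ A (y (π B).castSucc) (y (π B).succ) - ε)
    (j : Fin n) (t : Fin (4 * m + 3 * n + 1))
    (ht1 : y t.castSucc ≤ varStart m j) (ht2 : varStart m j + 4 ≤ y t.succ) : False := by
  have h1 := owns_left hε hmono hEF j t ht1 (by linarith)
  have h2 := owns_right hε hmono hEF j t (by linarith) ht2
  have := π.injective (h1.trans h2.symm)
  simp at this

end Main2
set_option maxHeartbeats 2000000 in
/-- If the cake-cutting instance constructed from the 3-SAT formula `φ`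
admits a contiguous `ε`-envy-free allocation (`0 ≤ ε ≤ 0.01`) in which at most `2m + n`
of the cuts lie strictly inside the union of the Clause- and Variable-Gadgets, then `φ`
is satisfiable. -/
theorem satisfiable_of_isolated_envy_free_allocation
    (m n : ℕ) (hm : 0 < m) (hn : 0 < n)
    (φ : Fin m → Fin 3 → Fin n × Bool)
    (ε : ℝ) (hε0 : 0 ≤ ε) (hε : ε ≤ 0.01)
    (y : Fin (4 * m + 3 * n + 1 + 1) → ℝ) (π : CakeAgent m n ≃ Fin (4 * m + 3 * n + 1))
    (hmono : Monotone y) (hy0 : y 0 = 0)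
    (hyL : y (Fin.last (4 * m + 3 * n + 1)) = 12 * m + 7 * n + 3)
    (hEF : ∀ A B : CakeAgent m n,
      cakeVal m n φ A (y (π A).castSucc) (y (π A).succ) ≥
        cakeVal m n φ A (y (π B).castSucc) (y (π B).succ) - ε)
    (hiso : {k : Fin (4 * m + 3 * n + 1 + 1) |
        k ≠ 0 ∧ k ≠ Fin.last (4 * m + 3 * n + 1) ∧ InGadgetInterior m n (y k)}.ncard
      ≤ 2 * m + n) :
    SatFormula m n φ := by
  classical
  have hm1 : (1:ℝ) ≤ (m:ℝ) := by exact_mod_cast hm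
  have hn1 : (1:ℝ) ≤ (n:ℝ) := by exact_mod_cast hn
  set Cut : Finset (Fin (4 * m + 3 * n + 1 + 1)) := Finset.univ.filter
    (fun k => k ≠ 0 ∧ k ≠ Fin.last (4 * m + 3 * n + 1) ∧ InGadgetInterior m n (y k)) with hCutdef
  set F : Fin m → Finset (Fin (4 * m + 3 * n + 1 + 1)) := fun i =>
    Finset.univ.filter (fun k => clauseStart i < y k ∧ y k < clauseStart i + 9) with hFdef
  set G : Fin n → Finset (Fin (4 * m + 3 * n + 1 + 1)) := fun j =>
    Finset.univ.filter (fun k => varStart m j < y k ∧ y k < varStart m j + 4) with hGdef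
  have hFmem : ∀ i k, k ∈ F i ↔ (clauseStart i < y k ∧ y k < clauseStart i + 9) := by
    intro i k; simp [hFdef]
  have hGmem : ∀ j k, k ∈ G j ↔ (varStart m j < y k ∧ y k < varStart m j + 4) := by
    intro j k; simp [hGdef]
  have hCut : Cut.card ≤ 2 * m + n := by
    have he : {k : Fin (4 * m + 3 * n + 1 + 1) |
        k ≠ 0 ∧ k ≠ Fin.last (4 * m + 3 * n + 1) ∧ InGadgetInterior m n (y k)} = ↑Cut := by
      ext k; simp [hCutdef]
    rwa [he, Set.ncard_coe_finset] at hiso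
  have hFsub : ∀ i, F i ⊆ Cut := by
    intro i k hk
    rw [hFmem] at hk
    simp only [hCutdef, Finset.mem_filter, Finset.mem_univ, true_and]
    refine ⟨?_, ?_, Or.inl ⟨i, hk⟩⟩
    · intro h0
      rw [h0, hy0] at hk
      have := clauseStart_ge i
      linarith [hk.1]
    · intro hL
      rw [hL, hyL] at hk
      have := clauseStart_le i
      linarith [hk.2]
  have hGsub : ∀ j, G j ⊆ Cut := by
    intro j k hk
    rw [hGmem] at hk
    simp only [hCutdef, Finset.mem_filter, Finset.mem_univ, true_and]
    refine ⟨?_, ?_, Or.inr ⟨j, hk⟩⟩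
    · intro h0
      rw [h0, hy0] at hk
      have := varStart_ge (m := m) j
      linarith [hk.1]
    · intro hL
      rw [hL, hyL] at hk
      have := varStart_le (m := m) j
      linarith [hk.2]
  have hdisjF : ∀ i i' : Fin m, i ≠ i' → Disjoint (F i) (F i') := by
    intro i i' hne
    rw [Finset.disjoint_left]
    intro k hk hk'
    rw [hFmem] at hk hk'
    unfold clauseStart at hk hk'
    have hne' : (i:ℕ) ≠ (i':ℕ) := fun h => hne (Fin.ext h)
    rcases lt_or_gt_of_ne hne' with h | h
    · have : ((i:ℕ):ℝ) + 1 ≤ ((i':ℕ):ℝ) := by exact_mod_cast h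
      linarith [hk.2, hk'.1]
    · have : ((i':ℕ):ℝ) + 1 ≤ ((i:ℕ):ℝ) := by exact_mod_cast h
      linarith [hk'.2, hk.1]
  have hdisjG : ∀ j j' : Fin n, j ≠ j' → Disjoint (G j) (G j') := by
    intro j j' hne
    rw [Finset.disjoint_left]
    intro k hk hk'
    rw [hGmem] at hk hk'
    unfold varStart at hk hk'
    have hne' : (j:ℕ) ≠ (j':ℕ) := fun h => hne (Fin.ext h)
    rcases lt_or_gt_of_ne hne' with h | h
    · have : ((j:ℕ):ℝ) + 1 ≤ ((j':ℕ):ℝ) := by exact_mod_cast h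
      linarith [hk.2, hk'.1]
    · have : ((j':ℕ):ℝ) + 1 ≤ ((j:ℕ):ℝ) := by exact_mod_cast h
      linarith [hk'.2, hk.1]
  have hdisjFG : ∀ (i : Fin m) (j : Fin n), Disjoint (F i) (G j) := by
    intro i j
    rw [Finset.disjoint_left]
    intro k hk hk'
    rw [hFmem] at hk
    rw [hGmem] at hk'
    have h1 := clauseStart_le i
    have h2 := varStart_ge (m := m) j
    linarith [hk.2, hk'.1]
  have hcards : (∑ i, (F i).card) + (∑ j, (G j).card) ≤ 2 * m + n := by
    have hsub : (Finset.univ.biUnion F ∪ Finset.univ.biUnion G) ⊆ Cut := by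
      apply Finset.union_subset
      · exact Finset.biUnion_subset.2 (fun i _ => hFsub i)
      · exact Finset.biUnion_subset.2 (fun j _ => hGsub j)
    have h1 : (Finset.univ.biUnion F ∪ Finset.univ.biUnion G).card ≤ Cut.card :=
      Finset.card_le_card hsub
    have hdisjU : Disjoint (Finset.univ.biUnion F) (Finset.univ.biUnion G) := by
      rw [Finset.disjoint_left]
      intro k hk hk'
      rw [Finset.mem_biUnion] at hk hk'
      obtain ⟨i, -, hki⟩ := hk
      obtain ⟨j, -, hkj⟩ := hk'
      exact Finset.disjoint_left.1 (hdisjFG i j) hki hkj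
    rw [Finset.card_union_of_disjoint hdisjU,
        Finset.card_biUnion (fun i _ i' _ h => hdisjF i i' h),
        Finset.card_biUnion (fun j _ j' _ h => hdisjG j j' h)] at h1
    omega
  have pieceLe : ∀ t : Fin (4 * m + 3 * n + 1), y t.castSucc ≤ y t.succ :=
    fun t => hmono (Fin.castSucc_le_succ t)
  have hG1 : ∀ j, 1 ≤ (G j).card := by
    intro j
    by_contra h
    have hempty : G j = ∅ := Finset.card_eq_zero.1 (by omega)
    have hno : ∀ k, ¬(varStart m j < y k ∧ y k < varStart m j + 4) := by
      intro k hk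
      have hkin : k ∈ G j := (hGmem j k).2 hk
      rw [hempty] at hkin
      exact absurd hkin (Finset.notMem_empty k)
    have h2 := varStart_ge (m := m) j
    have h3 := varStart_le (m := m) j
    obtain ⟨t, ht1, ht2⟩ := cover_piece y hmono (varStart m j) (varStart m j + 4)
      (by rw [hy0]; linarith) (by linarith) (by rw [hyL]; linarith) hno
    exact var_cover_false hε hmono hEF j t ht1 ht2
  have hF2 : ∀ i, 2 ≤ (F i).card := by
    intro i
    by_contra h
    have hA := clauseStart_ge i
    have hB := clauseStart_le i
    rcases (by omega : (F i).card = 0 ∨ (F i).card = 1) with h0 | h1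
    · have hempty : F i = ∅ := Finset.card_eq_zero.1 h0
      have hno : ∀ k, ¬(clauseStart i < y k ∧ y k < clauseStart i + 9) := by
        intro k hk
        have hkin : k ∈ F i := (hFmem i k).2 hk
        rw [hempty] at hkin
        exact absurd hkin (Finset.notMem_empty k)
      obtain ⟨t, ht1, ht2⟩ := cover_piece y hmono (clauseStart i) (clauseStart i + 9)
        (by rw [hy0]; linarith) (by linarith) (by rw [hyL]; linarith) hno
      exact clause_cover_false hε0 hε hmono hEF i t ht1 ht2
    · obtain ⟨p, hp⟩ := Finset.card_eq_one.1 h1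
      have hpmem : p ∈ F i := by rw [hp]; exact Finset.mem_singleton_self p
      rw [hFmem] at hpmem
      have huniq : ∀ k, clauseStart i < y k → y k < clauseStart i + 9 → k = p := by
        intro k hk1 hk2
        have : k ∈ F i := (hFmem i k).2 ⟨hk1, hk2⟩
        rw [hp, Finset.mem_singleton] at this
        exact this
      have hppos : 1 ≤ p.val := by
        by_contra hc
        have hp0 : p = 0 := Fin.ext (by simp only [Fin.val_zero]; omega)
        rw [hp0, hy0] at hpmem
        linarith [hpmem.1]
      have hplt : p.val < 4 * m + 3 * n + 1 := by
        have hislt := p.isLt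
        have : p.val ≠ 4 * m + 3 * n + 1 := by
          intro hc
          have : p = Fin.last (4 * m + 3 * n + 1) := Fin.ext (by rw [hc, Fin.val_last])
          rw [this, hyL] at hpmem
          linarith [hpmem.2]
        omega
      set s : Fin (4 * m + 3 * n + 1) := ⟨p.val - 1, by omega⟩ with hsdef
      set t : Fin (4 * m + 3 * n + 1) := ⟨p.val, hplt⟩ with htdef
      have hst : s ≠ t := by
        intro hc
        have := congrArg Fin.val hc
        simp [hsdef, htdef] at this
        omega
      have hmid : y s.succ = y t.castSucc := by
        apply congrArg
        apply Fin.ext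
        simp [hsdef, htdef, Fin.val_succ]
        omega
      have hs1 : y s.castSucc ≤ clauseStart i := by
        have hne : s.castSucc ≠ p := by
          intro hc
          have := congrArg Fin.val hc
          simp [hsdef] at this
          omega
        have hle : y s.castSucc ≤ y p := hmono (by simp only [Fin.le_def, hsdef, Fin.coe_castSucc] <;> omega)
        by_contra hc
        push_neg at hc
        exact hne (huniq s.castSucc hc (lt_of_le_of_lt hle hpmem.2))
      have ht2 : clauseStart i + 9 ≤ y t.succ := by
        have hne : t.succ ≠ p := by
          intro hc
          have := congrArg Fin.val hc
          simp [htdef, Fin.val_succ] at this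
        have hge : y p ≤ y t.succ := hmono (by simp only [Fin.le_def, htdef, Fin.val_succ, Fin.coe_castSucc] <;> omega)
        by_contra hc
        push_neg at hc
        exact hne (huniq t.succ (lt_of_lt_of_le hpmem.1 hge) hc)
      exact clause_cover2_false hε0 hε hmono hEF i s t hst hmid hs1 ht2
  have hFeq : ∀ i, (F i).card = 2 := by
    intro i
    by_contra h
    have h3 : 3 ≤ (F i).card := by have := hF2 i; omega
    have hsum1 : 2 * (m - 1) ≤ ∑ i' ∈ Finset.univ.erase i, (F i').card := by
      calc 2 * (m - 1) = ∑ _i' ∈ Finset.univ.erase i, 2 := by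
            rw [Finset.sum_const, Finset.card_erase_of_mem (Finset.mem_univ i)]
            simp [Finset.card_univ, mul_comm]
        _ ≤ _ := Finset.sum_le_sum (fun i' _ => hF2 i')
    have hsum2 : ∑ i' ∈ Finset.univ.erase i, (F i').card + (F i).card = ∑ i', (F i').card :=
      Finset.sum_erase_add _ _ (Finset.mem_univ i)
    have hsum3 : n ≤ ∑ j, (G j).card := by
      calc n = ∑ _j : Fin n, 1 := by simp
        _ ≤ _ := Finset.sum_le_sum (fun j _ => hG1 j)
    omega
  have hGeq : ∀ j, (G j).card = 1 := by
    intro j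
    by_contra h
    have h2 : 2 ≤ (G j).card := by have := hG1 j; omega
    have hsum1 : (n - 1) ≤ ∑ j' ∈ Finset.univ.erase j, (G j').card := by
      calc (n - 1) = ∑ _j' ∈ Finset.univ.erase j, 1 := by
            rw [Finset.sum_const, Finset.card_erase_of_mem (Finset.mem_univ j)]
            simp [Finset.card_univ]
        _ ≤ _ := Finset.sum_le_sum (fun j' _ => hG1 j')
    have hsum2 : ∑ j' ∈ Finset.univ.erase j, (G j').card + (G j).card = ∑ j', (G j').card :=
      Finset.sum_erase_add _ _ (Finset.mem_univ j)
    have hsum3 : 2 * m ≤ ∑ i, (F i).card := by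
      calc 2 * m = ∑ _i : Fin m, 2 := by simp [mul_comm]
        _ ≤ _ := Finset.sum_le_sum (fun i _ => hF2 i)
    omega
  -- variable gadget cuts
  have hGex : ∀ j, ∃ c, G j = {c} := fun j => Finset.card_eq_one.1 (hGeq j)
  choose cut hcut using hGex
  have hcutmem : ∀ j, varStart m j < y (cut j) ∧ y (cut j) < varStart m j + 4 := by
    intro j
    have : cut j ∈ G j := by rw [hcut j]; exact Finset.mem_singleton_self _
    rwa [hGmem] at this
  have hcutuniq : ∀ j k, varStart m j < y k → y k < varStart m j + 4 → k = cut j := by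
    intro j k h1 h2
    have : k ∈ G j := (hGmem j k).2 ⟨h1, h2⟩
    rw [hcut j, Finset.mem_singleton] at this
    exact this
  have hcpos : ∀ j, 1 ≤ (cut j).val := by
    intro j
    by_contra hc
    have h0 : cut j = 0 := Fin.ext (by simp only [Fin.val_zero]; omega)
    have h1 := (hcutmem j).1
    rw [h0, hy0] at h1
    have := varStart_ge (m := m) j
    linarith
  have hclt : ∀ j, (cut j).val < 4 * m + 3 * n + 1 := by
    intro j
    have hislt := (cut j).isLt
    have hne : (cut j).val ≠ 4 * m + 3 * n + 1 := by
      intro hc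
      have hLeq : cut j = Fin.last _ := Fin.ext (by rw [hc, Fin.val_last])
      have h1 := (hcutmem j).2
      rw [hLeq, hyL] at h1
      have := varStart_le (m := m) j
      linarith
    omega
  set Ps : Fin n → Fin (4 * m + 3 * n + 1) :=
    fun j => ⟨(cut j).val - 1, by have := (cut j).isLt; omega⟩ with hPsdef
  set Pt : Fin n → Fin (4 * m + 3 * n + 1) := fun j => ⟨(cut j).val, hclt j⟩ with hPtdef
  have hPs_succ : ∀ j, (Ps j).succ = cut j := by
    intro j
    apply Fin.ext
    simp only [Fin.val_succ, hPsdef]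
    have := hcpos j
    omega
  have hPt_cast : ∀ j, (Pt j).castSucc = cut j := by
    intro j
    apply Fin.ext
    simp only [Fin.coe_castSucc, hPtdef]
  have hPsL : ∀ j, y (Ps j).castSucc ≤ varStart m j := by
    intro j
    have hne : (Ps j).castSucc ≠ cut j := by
      intro hc
      have h1 := congrArg Fin.val hc
      simp only [Fin.coe_castSucc, hPsdef] at h1
      have := hcpos j
      omega
    have hle : y (Ps j).castSucc ≤ y (cut j) :=
      hmono (by simp only [Fin.le_def, Fin.coe_castSucc, hPsdef] <;> omega)
    by_contra hc
    push_neg at hc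
    exact hne (hcutuniq j _ hc (lt_of_le_of_lt hle (hcutmem j).2))
  have hPtR : ∀ j, varStart m j + 4 ≤ y (Pt j).succ := by
    intro j
    have hne : (Pt j).succ ≠ cut j := by
      intro hc
      have h1 := congrArg Fin.val hc
      simp only [Fin.val_succ, hPtdef] at h1
      omega
    have hge : y (cut j) ≤ y (Pt j).succ :=
      hmono (by simp only [Fin.le_def, Fin.val_succ, hPtdef] <;> omega)
    by_contra hc
    push_neg at hc
    exact hne (hcutuniq j _ (lt_of_lt_of_le (hcutmem j).1 hge) hc)
  have hLowns : ∀ j, varStart m j + 1 ≤ y (cut j) → π (.lt j) = Ps j := by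
    intro j h
    exact owns_left hε hmono hEF j (Ps j) (hPsL j)
      (by rw [congrArg y (hPs_succ j)]; exact h)
  have hRowns : ∀ j, y (cut j) ≤ varStart m j + 3 → π (.rt j) = Pt j := by
    intro j h
    exact owns_right hε hmono hEF j (Pt j)
      (by rw [congrArg y (hPt_cast j)]; linarith) (hPtR j)
  refine ⟨fun j => decide (y (cut j) ≤ varStart m j + 2.36), fun i => ?_⟩
  by_contra hcon
  push_neg at hcon
  -- clause gadget structure
  obtain ⟨p0, q0, hpq0, hFi0⟩ := Finset.card_eq_two.1 (hFeq i)
  have hpqlt : min p0 q0 < max p0 q0 := min_lt_max.2 hpq0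
  set p := min p0 q0 with hpdef
  set q := max p0 q0 with hqdef
  have hFi : F i = {p, q} := by
    rw [hFi0, hpdef, hqdef]
    rcases le_total p0 q0 with h | h
    · rw [min_eq_left h, max_eq_right h]
    · rw [min_eq_right h, max_eq_left h, Finset.pair_comm]
  have hmemFi : ∀ k, k ∈ F i ↔ k = p ∨ k = q := by
    intro k
    rw [hFi]
    simp
  have hpmem : clauseStart i < y p ∧ y p < clauseStart i + 9 := by
    have : p ∈ F i := (hmemFi p).2 (Or.inl rfl)
    rwa [hFmem] at this
  have hqmem : clauseStart i < y q ∧ y q < clauseStart i + 9 := by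
    have : q ∈ F i := (hmemFi q).2 (Or.inr rfl)
    rwa [hFmem] at this
  have huniqF : ∀ k, clauseStart i < y k → y k < clauseStart i + 9 → k = p ∨ k = q := by
    intro k h1 h2
    rw [← hmemFi, hFmem]
    exact ⟨h1, h2⟩
  have hclA := clauseStart_ge i
  have hclB := clauseStart_le i
  have hppos : 1 ≤ p.val := by
    by_contra hc
    have hp0 : p = 0 := Fin.ext (by simp only [Fin.val_zero]; omega)
    rw [hp0, hy0] at hpmem
    linarith [hpmem.1]
  have hqlt : q.val < 4 * m + 3 * n + 1 := by
    have hislt := q.isLt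
    have hne : q.val ≠ 4 * m + 3 * n + 1 := by
      intro hc
      have hql : q = Fin.last (4 * m + 3 * n + 1) := Fin.ext (by rw [hc, Fin.val_last])
      rw [hql, hyL] at hqmem
      linarith [hqmem.2]
    omega
  have hplq : p.val < q.val := hpqlt
  have hqp : q.val = p.val + 1 := by
    by_contra hne
    have h2 : p.val + 1 < q.val := by omega
    set r : Fin (4 * m + 3 * n + 1 + 1) := ⟨p.val + 1, by have := q.isLt; omega⟩ with hrdef
    have hyr1 : y p ≤ y r := hmono (by simp only [Fin.le_def, hrdef] <;> omega)
    have hyr2 : y r ≤ y q := hmono (by simp only [Fin.le_def, hrdef] <;> omega)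
    have hrF : r = p ∨ r = q :=
      huniqF r (lt_of_lt_of_le hpmem.1 hyr1) (lt_of_le_of_lt hyr2 hqmem.2)
    rcases hrF with h | h <;>
      · have := congrArg Fin.val h
        simp only [hrdef] at this
        omega
  set P1 : Fin (4 * m + 3 * n + 1) := ⟨p.val - 1, by have := p.isLt; omega⟩ with hP1def
  set P2 : Fin (4 * m + 3 * n + 1) := ⟨p.val, by omega⟩ with hP2def
  set P3 : Fin (4 * m + 3 * n + 1) := ⟨q.val, hqlt⟩ with hP3def
  have e1s : y P1.succ = y p := by
    apply congrArg
    apply Fin.ext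
    simp only [Fin.val_succ, hP1def]
    omega
  have e2c : y P2.castSucc = y p := by
    apply congrArg
    apply Fin.ext
    simp only [Fin.coe_castSucc, hP2def]
  have e2s : y P2.succ = y q := by
    apply congrArg
    apply Fin.ext
    simp only [Fin.val_succ, hP2def]
    omega
  have e3c : y P3.castSucc = y q := by
    apply congrArg
    apply Fin.ext
    simp only [Fin.coe_castSucc, hP3def]
  have e1c : y P1.castSucc ≤ clauseStart i := by
    have hle : y P1.castSucc ≤ y p :=
      hmono (by simp only [Fin.le_def, Fin.coe_castSucc, hP1def] <;> omega)
    by_contra hc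
    push_neg at hc
    rcases huniqF P1.castSucc hc (lt_of_le_of_lt hle hpmem.2) with h | h <;>
      · have := congrArg Fin.val h
        simp only [Fin.coe_castSucc, hP1def] at this
        omega
  have e3s : clauseStart i + 9 ≤ y P3.succ := by
    have hge : y q ≤ y P3.succ :=
      hmono (by simp only [Fin.le_def, Fin.val_succ, hP3def] <;> omega)
    by_contra hc
    push_neg at hc
    rcases huniqF P3.succ (lt_of_lt_of_le hqmem.1 hge) hc with h | h <;>
      · have := congrArg Fin.val h
        simp only [Fin.val_succ, hP3def] at this
        omega
  -- pressure: each clause agent of an unsatisfied clause needs 0.27 from its clause blocks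
  have hmain : ∀ k : Fin 3,
      0.27 ≤ olap (y (π (.cl i k)).castSucc) (y (π (.cl i k)).succ)
            (clauseStart i + ((k : ℕ) : ℝ)) (clauseStart i + ((k : ℕ) : ℝ) + 0.24) +
          olap (y (π (.cl i k)).castSucc) (y (π (.cl i k)).succ)
            (clauseStart i + ((k : ℕ) : ℝ) + 3) (clauseStart i + ((k : ℕ) : ℝ) + 3.24) +
          olap (y (π (.cl i k)).castSucc) (y (π (.cl i k)).succ)
            (clauseStart i + ((k : ℕ) : ℝ) + 6) (clauseStart i + ((k : ℕ) : ℝ) + 6.24) := by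
    intro k
    obtain ⟨j, pol, hjp⟩ : ∃ j pol, φ i k = (j, pol) := ⟨(φ i k).1, (φ i k).2, rfl⟩
    have hconk := hcon k
    rw [hjp] at hconk
    have hj1 := (hcutmem j).1
    have hj2 := (hcutmem j).2
    have hvg := varStart_ge (m := m) j
    have hexp := cakeVal_cl m n φ i k (pieceLe (π (.cl i k)))
    rw [hjp] at hexp
    have hcastPt : y (Pt j).castSucc = y (cut j) := congrArg y (hPt_cast j)
    have hsuccPs : y (Ps j).succ = y (cut j) := congrArg y (hPs_succ j)
    cases pol with
    | false =>
      have hz : y (cut j) ≤ varStart m j + 2.36 := by simpa using hconk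
      simp only [Bool.false_eq_true, if_false] at hexp
      have hvPt : 0.28 ≤ cakeVal m n φ (.cl i k) (y (Pt j).castSucc) (y (Pt j).succ) := by
        have hexp2 := cakeVal_cl m n φ i k (pieceLe (Pt j))
        rw [hjp] at hexp2
        simp only [Bool.false_eq_true, if_false] at hexp2
        rw [hexp2]
        have h4 := olap_eq_width (y (Pt j).castSucc) (y (Pt j).succ)
          (varStart m j + 2.5 - 0.14) (varStart m j + 2.5 + 0.14)
          (by rw [hcastPt]; linarith) (by linarith [hPtR j]) (by linarith)
        have n1 := olap_nonneg (y (Pt j).castSucc) (y (Pt j).succ)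
          (clauseStart i + ((k : ℕ) : ℝ)) (clauseStart i + ((k : ℕ) : ℝ) + 0.24)
        have n2 := olap_nonneg (y (Pt j).castSucc) (y (Pt j).succ)
          (clauseStart i + ((k : ℕ) : ℝ) + 3) (clauseStart i + ((k : ℕ) : ℝ) + 3.24)
        have n3 := olap_nonneg (y (Pt j).castSucc) (y (Pt j).succ)
          (clauseStart i + ((k : ℕ) : ℝ) + 6) (clauseStart i + ((k : ℕ) : ℝ) + 6.24)
        linarith
      have henvy := envy hEF (.cl i k) (Pt j)
      have hq4 : olap (y (π (.cl i k)).castSucc) (y (π (.cl i k)).succ)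
          (varStart m j + 2.5 - 0.14) (varStart m j + 2.5 + 0.14) ≤ 0 := by
        by_contra hpos
        push_neg at hpos
        have harg : 0 < min (y (π (.cl i k)).succ) (varStart m j + 2.5 + 0.14) -
            max (y (π (.cl i k)).castSucc) (varStart m j + 2.5 - 0.14) := by
          by_contra hc
          push_neg at hc
          unfold olap at hpos
          rw [max_eq_left hc] at hpos
          exact lt_irrefl 0 hpos
        have hyt : varStart m j + 2.36 < y (π (.cl i k)).succ := by
          have ha := le_max_right (y (π (.cl i k)).castSucc) (varStart m j + 2.5 - 0.14)
          have hb := min_le_left (y (π (.cl i k)).succ) (varStart m j + 2.5 + 0.14)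
          linarith
        have hyc : y (π (.cl i k)).castSucc < varStart m j + 2.64 := by
          have ha := le_max_left (y (π (.cl i k)).castSucc) (varStart m j + 2.5 - 0.14)
          have hb := min_le_right (y (π (.cl i k)).succ) (varStart m j + 2.5 + 0.14)
          linarith
        have hlow : (cut j).val - 1 ≤ (π (.cl i k)).val := by
          by_contra hc
          push_neg at hc
          have hle : y (π (.cl i k)).succ ≤ y (Ps j).castSucc :=
            hmono (by simp only [Fin.le_def, Fin.val_succ, Fin.coe_castSucc, hPsdef] <;> omega)
          have := hPsL j
          linarith
        have hhigh : (π (.cl i k)).val ≤ (cut j).val := by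
          by_contra hc
          push_neg at hc
          have hle : y (Pt j).succ ≤ y (π (.cl i k)).castSucc :=
            hmono (by simp only [Fin.le_def, Fin.val_succ, Fin.coe_castSucc, hPtdef] <;> omega)
          have := hPtR j
          linarith
        rcases (by omega : (π (.cl i k)).val = (cut j).val - 1 ∨
            (π (.cl i k)).val = (cut j).val) with hv | hv
        · have ht0Ps : π (.cl i k) = Ps j := Fin.ext (by simp only [hPsdef]; omega)
          rw [ht0Ps] at hyt
          rw [hsuccPs] at hyt
          linarith
        · have ht0Pt : π (.cl i k) = Pt j := Fin.ext (by simp only [hPtdef]; omega)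
          have hR := hRowns j (by linarith)
          have heq : π (.rt j) = π (.cl i k) := by rw [hR, ht0Pt]
          have := π.injective heq
          simp at this
      rw [hexp] at henvy
      linarith
    | true =>
      have hz : ¬ (y (cut j) ≤ varStart m j + 2.36) := by simpa using hconk
      push_neg at hz
      simp only [if_true] at hexp
      have hvPs : 0.28 ≤ cakeVal m n φ (.cl i k) (y (Ps j).castSucc) (y (Ps j).succ) := by
        have hexp2 := cakeVal_cl m n φ i k (pieceLe (Ps j))
        rw [hjp] at hexp2
        simp only [if_true] at hexp2
        rw [hexp2]
        have h4 := olap_eq_width (y (Ps j).castSucc) (y (Ps j).succ)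
          (varStart m j + 1.5 - 0.14) (varStart m j + 1.5 + 0.14)
          (by linarith [hPsL j]) (by rw [hsuccPs]; linarith) (by linarith)
        have n1 := olap_nonneg (y (Ps j).castSucc) (y (Ps j).succ)
          (clauseStart i + ((k : ℕ) : ℝ)) (clauseStart i + ((k : ℕ) : ℝ) + 0.24)
        have n2 := olap_nonneg (y (Ps j).castSucc) (y (Ps j).succ)
          (clauseStart i + ((k : ℕ) : ℝ) + 3) (clauseStart i + ((k : ℕ) : ℝ) + 3.24)
        have n3 := olap_nonneg (y (Ps j).castSucc) (y (Ps j).succ)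
          (clauseStart i + ((k : ℕ) : ℝ) + 6) (clauseStart i + ((k : ℕ) : ℝ) + 6.24)
        linarith
      have henvy := envy hEF (.cl i k) (Ps j)
      have hq4 : olap (y (π (.cl i k)).castSucc) (y (π (.cl i k)).succ)
          (varStart m j + 1.5 - 0.14) (varStart m j + 1.5 + 0.14) ≤ 0 := by
        by_contra hpos
        push_neg at hpos
        have harg : 0 < min (y (π (.cl i k)).succ) (varStart m j + 1.5 + 0.14) -
            max (y (π (.cl i k)).castSucc) (varStart m j + 1.5 - 0.14) := by
          by_contra hc
          push_neg at hc
          unfold olap at hpos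
          rw [max_eq_left hc] at hpos
          exact lt_irrefl 0 hpos
        have hyt : varStart m j + 1.36 < y (π (.cl i k)).succ := by
          have ha := le_max_right (y (π (.cl i k)).castSucc) (varStart m j + 1.5 - 0.14)
          have hb := min_le_left (y (π (.cl i k)).succ) (varStart m j + 1.5 + 0.14)
          linarith
        have hyc : y (π (.cl i k)).castSucc < varStart m j + 1.64 := by
          have ha := le_max_left (y (π (.cl i k)).castSucc) (varStart m j + 1.5 - 0.14)
          have hb := min_le_right (y (π (.cl i k)).succ) (varStart m j + 1.5 + 0.14)
          linarith
        have hlow : (cut j).val - 1 ≤ (π (.cl i k)).val := by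
          by_contra hc
          push_neg at hc
          have hle : y (π (.cl i k)).succ ≤ y (Ps j).castSucc :=
            hmono (by simp only [Fin.le_def, Fin.val_succ, Fin.coe_castSucc, hPsdef] <;> omega)
          have := hPsL j
          linarith
        have hhigh : (π (.cl i k)).val ≤ (cut j).val := by
          by_contra hc
          push_neg at hc
          have hle : y (Pt j).succ ≤ y (π (.cl i k)).castSucc :=
            hmono (by simp only [Fin.le_def, Fin.val_succ, Fin.coe_castSucc, hPtdef] <;> omega)
          have := hPtR j
          linarith
        rcases (by omega : (π (.cl i k)).val = (cut j).val - 1 ∨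
            (π (.cl i k)).val = (cut j).val) with hv | hv
        · have ht0Ps : π (.cl i k) = Ps j := Fin.ext (by simp only [hPsdef]; omega)
          have hL := hLowns j (by linarith)
          have heq : π (.lt j) = π (.cl i k) := by rw [hL, ht0Ps]
          have := π.injective heq
          simp at this
        · have ht0Pt : π (.cl i k) = Pt j := Fin.ext (by simp only [hPtdef]; omega)
          rw [ht0Pt, hcastPt] at hyc
          linarith
      rw [hexp] at henvy
      linarith
  -- locating the owners
  have hloc : ∀ k : Fin 3, π (.cl i k) = P1 ∨ π (.cl i k) = P2 ∨ π (.cl i k) = P3 := by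
    intro k
    have h27 := hmain k
    have hkc := kcast_le k
    have hkc0 : (0:ℝ) ≤ ((k:ℕ):ℝ) := Nat.cast_nonneg _
    have hex : ∃ u v : ℝ, clauseStart i ≤ u ∧ v ≤ clauseStart i + 8.5 ∧
        0 < olap (y (π (.cl i k)).castSucc) (y (π (.cl i k)).succ) u v := by
      by_contra hc
      push_neg at hc
      have h1 := hc (clauseStart i + ((k:ℕ):ℝ)) (clauseStart i + ((k:ℕ):ℝ) + 0.24)
        (by linarith) (by linarith)
      have h2 := hc (clauseStart i + ((k:ℕ):ℝ) + 3) (clauseStart i + ((k:ℕ):ℝ) + 3.24)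
        (by linarith) (by linarith)
      have h3 := hc (clauseStart i + ((k:ℕ):ℝ) + 6) (clauseStart i + ((k:ℕ):ℝ) + 6.24)
        (by linarith) (by linarith)
      linarith
    obtain ⟨u, v, hu, hv, hpos⟩ := hex
    have harg : 0 < min (y (π (.cl i k)).succ) v - max (y (π (.cl i k)).castSucc) u := by
      by_contra hcc
      push_neg at hcc
      unfold olap at hpos
      rw [max_eq_left hcc] at hpos
      exact lt_irrefl 0 hpos
    have hyt : clauseStart i < y (π (.cl i k)).succ := by
      have ha := le_max_right (y (π (.cl i k)).castSucc) u
      have hb := min_le_left (y (π (.cl i k)).succ) v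
      linarith
    have hyc : y (π (.cl i k)).castSucc < clauseStart i + 8.5 := by
      have ha := le_max_left (y (π (.cl i k)).castSucc) u
      have hb := min_le_right (y (π (.cl i k)).succ) v
      linarith
    have hlow : p.val - 1 ≤ (π (.cl i k)).val := by
      by_contra hcc
      push_neg at hcc
      have hle : y (π (.cl i k)).succ ≤ y P1.castSucc :=
        hmono (by simp only [Fin.le_def, Fin.val_succ, Fin.coe_castSucc, hP1def] <;> omega)
      linarith [e1c]
    have hhigh : (π (.cl i k)).val ≤ q.val := by
      by_contra hcc
      push_neg at hcc
      have hle : y P3.succ ≤ y (π (.cl i k)).castSucc :=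
        hmono (by simp only [Fin.le_def, Fin.val_succ, Fin.coe_castSucc, hP3def] <;> omega)
      linarith [e3s]
    rcases (by omega : (π (.cl i k)).val = p.val - 1 ∨ (π (.cl i k)).val = p.val ∨
        (π (.cl i k)).val = q.val) with h | h | h
    · exact Or.inl (Fin.ext (by simp only [hP1def]; omega))
    · exact Or.inr (Or.inl (Fin.ext (by simp only [hP2def]; omega)))
    · exact Or.inr (Or.inr (Fin.ext (by simp only [hP3def]; omega)))
  obtain ⟨⟨k1, hk1⟩, ⟨k2, hk2⟩, ⟨k3, hk3⟩⟩ :=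
    fin3_hits (fun k => π (.cl i k)) (inj_cl i) P1 P2 P3 hloc
  have hz1 : clauseStart i + 3.03 ≤ y p := by
    have h27 := hmain k1
    rw [hk1, e1s] at h27
    have hkc := kcast_le k1
    have hkc0 : (0:ℝ) ≤ ((k1:ℕ):ℝ) := Nat.cast_nonneg _
    by_contra hcc
    push_neg at hcc
    have h1 := olap_le_width (y P1.castSucc) (y p)
      (clauseStart i + ((k1:ℕ):ℝ)) (clauseStart i + ((k1:ℕ):ℝ) + 0.24) (by linarith)
    have h2 := olap_le (y P1.castSucc) (y p)
      (clauseStart i + ((k1:ℕ):ℝ) + 3) (clauseStart i + ((k1:ℕ):ℝ) + 3.24)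
    have h3 := olap_le (y P1.castSucc) (y p)
      (clauseStart i + ((k1:ℕ):ℝ) + 6) (clauseStart i + ((k1:ℕ):ℝ) + 6.24)
    have h2' : max (0:ℝ) (y p - (clauseStart i + ((k1:ℕ):ℝ) + 3)) < 0.03 :=
      max_lt (by norm_num) (by linarith)
    have h3' : max (0:ℝ) (y p - (clauseStart i + ((k1:ℕ):ℝ) + 6)) ≤ 0 :=
      max_le le_rfl (by linarith)
    linarith
  have hz2 : y q ≤ clauseStart i + 5.21 := by
    have h27 := hmain k3
    rw [hk3, e3c] at h27
    have hkc := kcast_le k3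
    have hkc0 : (0:ℝ) ≤ ((k3:ℕ):ℝ) := Nat.cast_nonneg _
    have hq' : y q ≤ clauseStart i + ((k3:ℕ):ℝ) + 3.21 := by
      by_contra hcc
      push_neg at hcc
      have h3 := olap_le_width (y q) (y P3.succ)
        (clauseStart i + ((k3:ℕ):ℝ) + 6) (clauseStart i + ((k3:ℕ):ℝ) + 6.24) (by linarith)
      have h2 := olap_le' (y q) (y P3.succ)
        (clauseStart i + ((k3:ℕ):ℝ) + 3) (clauseStart i + ((k3:ℕ):ℝ) + 3.24)
      have h1 := olap_le' (y q) (y P3.succ)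
        (clauseStart i + ((k3:ℕ):ℝ)) (clauseStart i + ((k3:ℕ):ℝ) + 0.24)
      have h2' : max (0:ℝ) (clauseStart i + ((k3:ℕ):ℝ) + 3.24 - y q) < 0.03 :=
        max_lt (by norm_num) (by linarith)
      have h1' : max (0:ℝ) (clauseStart i + ((k3:ℕ):ℝ) + 0.24 - y q) ≤ 0 :=
        max_le le_rfl (by linarith)
      linarith
    linarith
  have h27 := hmain k2
  rw [hk2, e2c, e2s] at h27
  have hkc := kcast_le k2
  have hkc0 : (0:ℝ) ≤ ((k2:ℕ):ℝ) := Nat.cast_nonneg _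
  have h2 := olap_le_width (y p) (y q)
    (clauseStart i + ((k2:ℕ):ℝ) + 3) (clauseStart i + ((k2:ℕ):ℝ) + 3.24) (by linarith)
  have h1 := olap_le' (y p) (y q)
    (clauseStart i + ((k2:ℕ):ℝ)) (clauseStart i + ((k2:ℕ):ℝ) + 0.24)
  have h3 := olap_le (y p) (y q)
    (clauseStart i + ((k2:ℕ):ℝ) + 6) (clauseStart i + ((k2:ℕ):ℝ) + 6.24)
  have h1' : max (0:ℝ) (clauseStart i + ((k2:ℕ):ℝ) + 0.24 - y p) ≤ 0 :=
    max_le le_rfl (by linarith)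
  have h3' : max (0:ℝ) (y q - (clauseStart i + ((k2:ℕ):ℝ) + 6)) ≤ 0 :=
    max_le le_rfl (by linarith)
  linarith
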